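/- Let \lambda > 0, let 1 \le m \le N be integers, and let D be a real number with D \ge N - m + 1. Define f_{R_m}(r) = 2\lambda\pi r (1 - e^{-\lambda\pi r^2})^{m-1} (e^{-\lambda\pi r^2})^{N-m+1} / B(N-m+1, m) for r \ge 0, where B is the Beta function. Then the integral \int_0^\infty e^{\pi\lambda D r^2} f_{R_m}(r) \, dr diverges (equals +\infty). Together with the convergent case, this shows: the mean local delay M_{-1,(m)} = \int_0^\infty e^{\pi\lambda D_{1,m} r^2} f_{R_m}(r) \, dr is finite and equals B(N-m-D_{1,m}+1, m)/B(N-m+1, m) if D_{1,m} < N-m+1, and is infinite if D_{1,m} \ge N-m+1. -/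

import Mathlib

open MeasureTheory Real
open scoped ENNReal

/-- The Beta function `B(a,b) = Γ(a)Γ(b)/Γ(a+b)`. -/
noncomputable def betaFun (a b : ℝ) : ℝ := Real.Gamma a * Real.Gamma b / Real.Gamma (a + b)

/-- One-dimensional change of variables for Lebesgue integrals. -/
theorem lintegral_image_eq_lintegral_abs_deriv_mul' {s : Set ℝ} {f f' : ℝ → ℝ}
    (hs : MeasurableSet s) (hf' : ∀ x ∈ s, HasDerivWithinAt f (f' x) s x)
    (hf : Set.InjOn f s) (g : ℝ → ℝ≥0∞) :
    ∫⁻ x in f '' s, g x = ∫⁻ x in s, ENNReal.ofReal |f' x| * g (f x) := by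
  simpa only [ContinuousLinearMap.det_toSpanSingleton] using
    lintegral_image_eq_lintegral_abs_det_fderiv_mul volume hs
      (fun x hx => (hf' x hx).hasFDerivWithinAt) hf g

/-- The real Beta integral. -/
theorem real_beta_integral_aux {p : ℝ} (hp : -1 < p) {m : ℕ} (hm : 1 ≤ m) :
    ∫ x in Set.Ioo (0:ℝ) 1, x ^ p * (1 - x) ^ (m - 1) = betaFun (p + 1) m := by
  have hmR : (1:ℝ) ≤ (m:ℝ) := by exact_mod_cast hm
  have hs : 0 < Complex.re ((p + 1 : ℝ) : ℂ) := by
    rw [Complex.ofReal_re]; linarith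
  have ht : 0 < Complex.re ((m : ℝ) : ℂ) := by
    rw [Complex.ofReal_re]; linarith
  have key := Complex.Gamma_mul_Gamma_eq_betaIntegral hs ht
  have hbi : Complex.betaIntegral ((p + 1 : ℝ) : ℂ) ((m : ℝ) : ℂ)
      = ((∫ x in (0:ℝ)..1, x ^ p * (1 - x) ^ (m - 1) : ℝ) : ℂ) := by
    rw [Complex.betaIntegral, ← intervalIntegral.integral_ofReal]
    refine intervalIntegral.integral_congr fun x hx => ?_
    rw [Set.uIcc_of_le zero_le_one] at hx
    obtain ⟨hx0, hx1⟩ := hx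
    have e1 : ((p + 1 : ℝ) : ℂ) - 1 = (p : ℂ) := by push_cast; ring
    have e2 : ((m : ℝ) : ℂ) - 1 = ((m - 1 : ℕ) : ℂ) := by
      push_cast [Nat.cast_sub hm]; ring
    have e3 : (1 : ℂ) - (x : ℂ) = ((1 - x : ℝ) : ℂ) := by push_cast; ring
    rw [e1, e2, e3, Complex.cpow_natCast, ← Complex.ofReal_cpow hx0]
    push_cast
    ring
  rw [hbi] at key
  have e4 : ((p + 1 : ℝ) : ℂ) + ((m : ℝ) : ℂ) = ((p + 1 + (m:ℝ) : ℝ) : ℂ) := by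
    push_cast; ring
  rw [e4, Complex.Gamma_ofReal, Complex.Gamma_ofReal, Complex.Gamma_ofReal] at key
  have key2 : Real.Gamma (p + 1) * Real.Gamma (m : ℝ)
      = Real.Gamma (p + 1 + (m:ℝ)) * ∫ x in (0:ℝ)..1, x ^ p * (1 - x) ^ (m - 1) := by
    exact_mod_cast key
  have hG : Real.Gamma (p + 1 + (m:ℝ)) ≠ 0 :=
    (Real.Gamma_pos_of_pos (by linarith)).ne'
  have hval : ∫ x in (0:ℝ)..1, x ^ p * (1 - x) ^ (m - 1) = betaFun (p + 1) m := by
    rw [betaFun, eq_div_iff hG]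
    linear_combination -key2
  rw [← hval, intervalIntegral.integral_of_le zero_le_one,
    MeasureTheory.integral_Ioc_eq_integral_Ioo]

/-- Mean local delay of the `m`-th rank downlink NOMA user: the integral
`∫₀^∞ e^(πλD r²) f_{R_m}(r) dr` (stated as a Lebesgue integral so that it may be infinite)
diverges when `D ≥ N - m + 1`, and equals `B(N-m-D+1, m)/B(N-m+1, m)` when `D < N - m + 1`. -/
theorem downlink_mean_local_delay_finite_iff
    (lam : ℝ) (hlam : 0 < lam) (m N : ℕ) (hm : 1 ≤ m) (hmN : m ≤ N) (D : ℝ) :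
    (D ≥ (N : ℝ) - m + 1 →
      (∫⁻ r in Set.Ioi (0 : ℝ),
          ENNReal.ofReal (Real.exp (π * lam * D * r ^ 2) *
            (2 * lam * π * r * (1 - Real.exp (-lam * π * r ^ 2)) ^ (m - 1) *
                (Real.exp (-lam * π * r ^ 2)) ^ (N - m + 1) /
              betaFun ((N : ℝ) - m + 1) m))) = ⊤) ∧
    (D < (N : ℝ) - m + 1 →
      (∫⁻ r in Set.Ioi (0 : ℝ),
          ENNReal.ofReal (Real.exp (π * lam * D * r ^ 2) *
            (2 * lam * π * r * (1 - Real.exp (-lam * π * r ^ 2)) ^ (m - 1) *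
                (Real.exp (-lam * π * r ^ 2)) ^ (N - m + 1) /
              betaFun ((N : ℝ) - m + 1) m))) =
        ENNReal.ofReal (betaFun ((N : ℝ) - m - D + 1) m / betaFun ((N : ℝ) - m + 1) m)) := by
  have hπ : (0:ℝ) < π := pi_pos
  have hmR : (1:ℝ) ≤ (m:ℝ) := by exact_mod_cast hm
  have hmNR : (m:ℝ) ≤ (N:ℝ) := by exact_mod_cast hmN
  have ha : (0:ℝ) < lam * π := mul_pos hlam hπ
  have hB : 0 < betaFun ((N : ℝ) - m + 1) m := by
    have h1 : (0:ℝ) < (N:ℝ) - m + 1 := by linarith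
    have h2 : (0:ℝ) < (m:ℝ) := by linarith
    exact div_pos (mul_pos (Real.Gamma_pos_of_pos h1) (Real.Gamma_pos_of_pos h2))
      (Real.Gamma_pos_of_pos (by linarith))
  set B := betaFun ((N : ℝ) - m + 1) m with hBdef
  set p : ℝ := (N : ℝ) - m - D with hpdef
  -- the change of variables `u = exp(-λπ r²)`
  have hCOV : (∫⁻ r in Set.Ioi (0 : ℝ),
        ENNReal.ofReal (Real.exp (π * lam * D * r ^ 2) *
          (2 * lam * π * r * (1 - Real.exp (-lam * π * r ^ 2)) ^ (m - 1) *
              (Real.exp (-lam * π * r ^ 2)) ^ (N - m + 1) / B)))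
      = ∫⁻ u in Set.Ioo (0:ℝ) 1,
          ENNReal.ofReal (u ^ p * (1 - u) ^ (m - 1) / B) := by
    have hder : ∀ r ∈ Set.Ioi (0:ℝ),
        HasDerivWithinAt (fun r : ℝ => Real.exp (-lam * π * r ^ 2))
          (Real.exp (-lam * π * r ^ 2) * (-lam * π * (2 * r))) (Set.Ioi 0) r := by
      intro r _
      have h1 : HasDerivAt (fun r : ℝ => -lam * π * r ^ 2) (-lam * π * (2 * r)) r := by
        have := HasDerivAt.const_mul (-lam * π) (hasDerivAt_pow 2 r)
        simpa [pow_one] using this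
      exact h1.exp.hasDerivWithinAt
    have hinj : Set.InjOn (fun r : ℝ => Real.exp (-lam * π * r ^ 2)) (Set.Ioi 0) := by
      intro x hx y hy hxy
      have hx0 : (0:ℝ) < x := hx
      have hy0 : (0:ℝ) < y := hy
      have h1 : -lam * π * x ^ 2 = -lam * π * y ^ 2 := Real.exp_injective hxy
      have hne : -lam * π ≠ 0 := by
        have : -lam * π < 0 := by nlinarith [mul_pos hlam hπ]
        exact this.ne
      have h2 : x ^ 2 = y ^ 2 := mul_left_cancel₀ hne h1
      calc x = Real.sqrt (x ^ 2) := (Real.sqrt_sq hx0.le).symm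
        _ = Real.sqrt (y ^ 2) := by rw [h2]
        _ = y := Real.sqrt_sq hy0.le
    have himg : (fun r : ℝ => Real.exp (-lam * π * r ^ 2)) '' Set.Ioi 0 = Set.Ioo 0 1 := by
      ext u
      simp only [Set.mem_image, Set.mem_Ioi, Set.mem_Ioo]
      constructor
      · rintro ⟨r, hr, rfl⟩
        refine ⟨Real.exp_pos _, ?_⟩
        have harg : -lam * π * r ^ 2 < 0 := by nlinarith [mul_pos (mul_pos hlam hπ) (pow_pos hr 2)]
        calc Real.exp (-lam * π * r ^ 2) < Real.exp 0 := Real.exp_lt_exp.2 harg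
          _ = 1 := Real.exp_zero
      · rintro ⟨hu0, hu1⟩
        have hlog : Real.log u < 0 := Real.log_neg hu0 hu1
        have hq : (0:ℝ) < -Real.log u / (lam * π) := div_pos (by linarith) ha
        refine ⟨Real.sqrt (-Real.log u / (lam * π)), Real.sqrt_pos.2 hq, ?_⟩
        rw [Real.sq_sqrt hq.le]
        have : -lam * π * (-Real.log u / (lam * π)) = Real.log u := by
          field_simp
        rw [this, Real.exp_log hu0]
    have key := lintegral_image_eq_lintegral_abs_deriv_mul' measurableSet_Ioi hder hinj
      (fun u => ENNReal.ofReal (u ^ p * (1 - u) ^ (m - 1) / B))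
    rw [himg] at key
    rw [key]
    refine setLIntegral_congr_fun measurableSet_Ioi (fun r hr => ?_)
    have hr0 : (0:ℝ) < r := hr
    rw [← ENNReal.ofReal_mul (abs_nonneg _)]
    congr 1
    have habs : |Real.exp (-lam * π * r ^ 2) * (-lam * π * (2 * r))|
        = Real.exp (-lam * π * r ^ 2) * (lam * π * (2 * r)) := by
      rw [abs_mul, abs_of_pos (Real.exp_pos _), abs_of_neg (show -lam * π * (2 * r) < 0 by nlinarith [mul_pos (mul_pos hlam hπ) hr0])]
      ring
    have hrpow : Real.exp (-lam * π * r ^ 2) ^ p = Real.exp ((-lam * π * r ^ 2) * p) :=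
      (Real.exp_mul _ _).symm
    have hnpow : Real.exp (-lam * π * r ^ 2) ^ (N - m + 1)
        = Real.exp ((-lam * π * r ^ 2) * ((N - m + 1 : ℕ) : ℝ)) := by
      rw [← Real.rpow_natCast (Real.exp (-lam * π * r ^ 2)) (N - m + 1), ← Real.exp_mul]
    have hexp : Real.exp (-lam * π * r ^ 2) * Real.exp ((-lam * π * r ^ 2) * p)
        = Real.exp (π * lam * D * r ^ 2) * Real.exp ((-lam * π * r ^ 2) * ((N - m + 1 : ℕ) : ℝ)) := by
      rw [← Real.exp_add, ← Real.exp_add]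
      congr 1
      rw [hpdef]
      push_cast [Nat.cast_sub hmN]
      ring
    rw [habs, hrpow, hnpow]
    linear_combination (-(2 * lam * π * r) * (1 - Real.exp (-lam * π * r ^ 2)) ^ (m - 1) / B) * hexp
  constructor
  · -- divergent case
    intro hD
    have hp1 : p ≤ -1 := by rw [hpdef]; linarith
    rw [hCOV]
    by_contra hne
    have hlt : (∫⁻ u in Set.Ioo (0:ℝ) (1/2),
        ENNReal.ofReal (u ^ p * (1 - u) ^ (m - 1) / B)) < ⊤ :=
      lt_of_le_of_lt (lintegral_mono_set (Set.Ioo_subset_Ioo_right (by norm_num)))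
        (lt_top_iff_ne_top.2 hne)
    have hnn : 0 ≤ᵐ[volume.restrict (Set.Ioo (0:ℝ) (1/2))]
        fun u : ℝ => u ^ p * (1 - u) ^ (m - 1) / B := by
      refine (ae_restrict_iff' measurableSet_Ioo).2 (ae_of_all _ fun u hu => ?_)
      have h1 : (0:ℝ) ≤ u ^ p := Real.rpow_nonneg hu.1.le p
      have h2 : (0:ℝ) ≤ (1 - u) ^ (m - 1) := pow_nonneg (by linarith [hu.2]) _
      exact div_nonneg (mul_nonneg h1 h2) hB.le
    have haesm : AEStronglyMeasurable (fun u : ℝ => u ^ p * (1 - u) ^ (m - 1) / B)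
        (volume.restrict (Set.Ioo (0:ℝ) (1/2))) := by
      refine ContinuousOn.aestronglyMeasurable ?_ measurableSet_Ioo
      exact ((continuousOn_id.rpow_const fun x hx => Or.inl hx.1.ne').mul
        ((continuous_const.sub continuous_id).pow (m - 1)).continuousOn).div_const B
    have hIntOn : IntegrableOn (fun u : ℝ => u ^ p * (1 - u) ^ (m - 1) / B)
        (Set.Ioo (0:ℝ) (1/2)) := ⟨haesm, (hasFiniteIntegral_iff_ofReal hnn).2 hlt⟩
    have haesm2 : AEStronglyMeasurable (fun u : ℝ => u ^ p)
        (volume.restrict (Set.Ioo (0:ℝ) (1/2))) := by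
      refine ContinuousOn.aestronglyMeasurable ?_ measurableSet_Ioo
      exact continuousOn_id.rpow_const fun x hx => Or.inl hx.1.ne'
    have hIntP : IntegrableOn (fun u : ℝ => u ^ p) (Set.Ioo (0:ℝ) (1/2)) := by
      refine Integrable.mono' (hIntOn.const_mul (B * 2 ^ (m - 1))) haesm2 ?_
      refine (ae_restrict_iff' measurableSet_Ioo).2 (ae_of_all _ fun u hu => ?_)
      have hup : (0:ℝ) ≤ u ^ p := Real.rpow_nonneg hu.1.le p
      have h1 : (1/2:ℝ) ^ (m - 1) ≤ (1 - u) ^ (m - 1) :=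
        pow_le_pow_left₀ (by norm_num) (by linarith [hu.2]) _
      have h2 : (2:ℝ) ^ (m - 1) * (1/2) ^ (m - 1) = 1 := by
        rw [← mul_pow]; norm_num
      calc ‖u ^ p‖ = u ^ p := Real.norm_of_nonneg hup
        _ = (2 ^ (m - 1) * (1/2) ^ (m - 1)) * u ^ p := by rw [h2, one_mul]
        _ ≤ (2 ^ (m - 1) * (1 - u) ^ (m - 1)) * u ^ p := by
            refine mul_le_mul_of_nonneg_right ?_ hup
            exact mul_le_mul_of_nonneg_left h1 (by positivity)
        _ = B * 2 ^ (m - 1) * (u ^ p * (1 - u) ^ (m - 1) / B) := by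
            field_simp
    have := (intervalIntegral.integrableOn_Ioo_rpow_iff (by norm_num : (0:ℝ) < 1/2)).1 hIntP
    linarith
  · -- convergent case
    intro hD
    have hp1 : -1 < p := by rw [hpdef]; linarith
    rw [hCOV]
    have hnn : 0 ≤ᵐ[volume.restrict (Set.Ioo (0:ℝ) 1)]
        fun u : ℝ => u ^ p * (1 - u) ^ (m - 1) / B := by
      refine (ae_restrict_iff' measurableSet_Ioo).2 (ae_of_all _ fun u hu => ?_)
      have h1 : (0:ℝ) ≤ u ^ p := Real.rpow_nonneg hu.1.le p
      have h2 : (0:ℝ) ≤ (1 - u) ^ (m - 1) := pow_nonneg (by linarith [hu.2]) _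
      exact div_nonneg (mul_nonneg h1 h2) hB.le
    have hint_p : IntegrableOn (fun u : ℝ => u ^ p) (Set.Ioo (0:ℝ) 1) :=
      (intervalIntegral.integrableOn_Ioo_rpow_iff one_pos).2 hp1
    have haesm : AEStronglyMeasurable (fun u : ℝ => (1 - u) ^ (m - 1))
        (volume.restrict (Set.Ioo (0:ℝ) 1)) :=
      (((continuous_const.sub continuous_id).pow (m - 1)).continuousOn).aestronglyMeasurable
        measurableSet_Ioo
    have hbdd : ∀ᵐ u ∂(volume.restrict (Set.Ioo (0:ℝ) 1)), ‖(1 - u) ^ (m - 1)‖ ≤ 1 := by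
      refine (ae_restrict_iff' measurableSet_Ioo).2 (ae_of_all _ fun u hu => ?_)
      rw [norm_pow, Real.norm_eq_abs]
      exact pow_le_one₀ (abs_nonneg _) (abs_le.2 ⟨by linarith [hu.2], by linarith [hu.1]⟩)
    have hint0 : IntegrableOn (fun u : ℝ => (1 - u) ^ (m - 1) * u ^ p) (Set.Ioo (0:ℝ) 1) :=
      hint_p.bdd_mul haesm hbdd
    have hint : IntegrableOn (fun u : ℝ => u ^ p * (1 - u) ^ (m - 1) / B) (Set.Ioo (0:ℝ) 1) := by
      have heq : (fun u : ℝ => (1 - u) ^ (m - 1) * u ^ p / B)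
          = fun u : ℝ => u ^ p * (1 - u) ^ (m - 1) / B := by
        funext u; ring
      rw [← heq]; exact hint0.div_const B
    rw [← ofReal_integral_eq_lintegral_ofReal hint hnn]
    congr 1
    rw [MeasureTheory.integral_div, real_beta_integral_aux hp1 hm]
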